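/- Suppose a₁ = q₂ + l₂q₁ ≠ 0, a₂ = q₁ + l₁q₂ ≠ 0, and J = 1 − l₁l₂ − a₁s₁ − a₂s₂ < 0. With x₁ = s₁ − l₁s₂ − q₁s₁s₂, x₂ = s₂ − l₂s₁ − q₂s₁s₂, b₁ = q₁x₂ − q₂x₁ + l₁l₂ − 1, b₂ = q₂x₁ − q₁x₂ + l₁l₂ − 1, c₁ = x₁ + l₁x₂, c₂ = x₂ + l₂x₁, and Δᵢ = bᵢ² − 4aᵢcᵢ, the first direct separating structure recovers the actual sources: (−b₁ + √Δ₁)/(2a₁) = s₁ and (−b₂ + √Δ₂)/(2a₂) = s₂ (where √ denotes the real square root). -/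

import Mathlib

/-- When `J < 0`, the first direct separating structure recovers the actual sources:
`(−b₁ + √Δ₁)/(2a₁) = s₁` and `(−b₂ + √Δ₂)/(2a₂) = s₂`. -/
theorem stmt_5 (l₁ l₂ q₁ q₂ s₁ s₂ x₁ x₂ a₁ a₂ b₁ b₂ c₁ c₂ Δ₁ Δ₂ J : ℝ)
    (ha₁ : a₁ = q₂ + l₂ * q₁) (ha₁0 : a₁ ≠ 0)
    (ha₂ : a₂ = q₁ + l₁ * q₂) (ha₂0 : a₂ ≠ 0)
    (hJ : J = 1 - l₁ * l₂ - a₁ * s₁ - a₂ * s₂) (hJ0 : J < 0)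
    (hx₁ : x₁ = s₁ - l₁ * s₂ - q₁ * s₁ * s₂)
    (hx₂ : x₂ = s₂ - l₂ * s₁ - q₂ * s₁ * s₂)
    (hb₁ : b₁ = q₁ * x₂ - q₂ * x₁ + l₁ * l₂ - 1)
    (hb₂ : b₂ = q₂ * x₁ - q₁ * x₂ + l₁ * l₂ - 1)
    (hc₁ : c₁ = x₁ + l₁ * x₂)
    (hc₂ : c₂ = x₂ + l₂ * x₁)
    (hΔ₁ : Δ₁ = b₁ ^ 2 - 4 * a₁ * c₁)
    (hΔ₂ : Δ₂ = b₂ ^ 2 - 4 * a₂ * c₂) :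
    (-b₁ + Real.sqrt Δ₁) / (2 * a₁) = s₁ ∧
    (-b₂ + Real.sqrt Δ₂) / (2 * a₂) = s₂ := by
  subst ha₁ ha₂ hx₁ hx₂ hb₁ hb₂ hc₁ hc₂ hΔ₁ hΔ₂
  have hD1 : (q₁ * (s₂ - l₂ * s₁ - q₂ * s₁ * s₂) - q₂ * (s₁ - l₁ * s₂ - q₁ * s₁ * s₂) + l₁ * l₂ - 1) ^ 2 -
      4 * (q₂ + l₂ * q₁) * ((s₁ - l₁ * s₂ - q₁ * s₁ * s₂) + l₁ * (s₂ - l₂ * s₁ - q₂ * s₁ * s₂)) = J ^ 2 := by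
    rw [hJ]; ring
  have hD2 : (q₂ * (s₁ - l₁ * s₂ - q₁ * s₁ * s₂) - q₁ * (s₂ - l₂ * s₁ - q₂ * s₁ * s₂) + l₁ * l₂ - 1) ^ 2 -
      4 * (q₁ + l₁ * q₂) * ((s₂ - l₂ * s₁ - q₂ * s₁ * s₂) + l₂ * (s₁ - l₁ * s₂ - q₁ * s₁ * s₂)) = J ^ 2 := by
    rw [hJ]; ring
  have hs : Real.sqrt (J ^ 2) = -J := by
    rw [show J ^ 2 = (-J) ^ 2 by ring, Real.sqrt_sq (by linarith)]
  rw [hD1, hD2, hs]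
  constructor
  · rw [div_eq_iff (mul_ne_zero two_ne_zero ha₁0), hJ]; ring
  · rw [div_eq_iff (mul_ne_zero two_ne_zero ha₂0), hJ]; ring
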